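/- For a separable nonnegative lower semicontinuous cost c = c₁ + c₂, the minimal transport cost equals the minimal cardinal flow cost: inf over couplings π ∈ Π(μ,ν) of ∫ c dπ equals inf over cardinal flows (f¹,f²) ∈ F(μ,ν) of ∫ c₁ df¹ + ∫ c₂ df². -/

import Mathlib

open MeasureTheory ProbabilityTheory
open scoped ENNReal ProbabilityTheory

noncomputable section

variable {X₁ X₂ Y₁ Y₂ : Type*} [MeasurableSpace X₁] [MeasurableSpace X₂]
  [MeasurableSpace Y₁] [MeasurableSpace Y₂]

/-- `π` is a transportation plan (coupling) between `μ` and `ν`. -/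
def IsCoupling {A B : Type*} [MeasurableSpace A] [MeasurableSpace B]
    (π : Measure (A × B)) (μ : Measure A) (ν : Measure B) : Prop :=
  π.map Prod.fst = μ ∧ π.map Prod.snd = ν

/-- The minimal transportation (Wasserstein) cost for the cost `c`. -/
noncomputable def Wc {A B : Type*} [MeasurableSpace A] [MeasurableSpace B]
    (c : A → B → ℝ≥0∞) (μ : Measure A) (ν : Measure B) : ℝ≥0∞ :=
  ⨅ π ∈ {π : Measure (A × B) | IsCoupling π μ ν}, ∫⁻ p, c p.1 p.2 ∂π

/-- `(f1, f2)` is a cardinal flow between `μ ∈ P(X₁ × X₂)` and `ν ∈ P(Y₁ × Y₂)`: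
the marginal of `f1` on `X = X₁ × X₂` is `μ`, the marginal of `f2` on `Y = Y₁ × Y₂` is `ν`,
and `f1`, `f2` have the same marginal on `Y₁ × X₂`. -/
def IsCardinalFlow (μ : Measure (X₁ × X₂)) (ν : Measure (Y₁ × Y₂))
    (f1 : Measure ((X₁ × X₂) × Y₁)) (f2 : Measure (X₂ × (Y₁ × Y₂))) : Prop :=
  f1.map Prod.fst = μ ∧ f2.map Prod.snd = ν ∧
    f1.map (fun p => (p.2, p.1.2)) = f2.map (fun p => (p.2.1, p.1))

/-- The set of cardinal flows between `μ` and `ν`. -/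
def Flows (μ : Measure (X₁ × X₂)) (ν : Measure (Y₁ × Y₂)) :
    Set (Measure ((X₁ × X₂) × Y₁) × Measure (X₂ × (Y₁ × Y₂))) :=
  {F | IsProbabilityMeasure F.1 ∧ IsProbabilityMeasure F.2 ∧ IsCardinalFlow μ ν F.1 F.2}

/-- The cardinal flow functional `CT(f¹,f²) = ∫ c₁ df¹ + ∫ c₂ df²`. -/
noncomputable def CT (c₁ : X₁ → Y₁ → ℝ≥0∞) (c₂ : X₂ → Y₂ → ℝ≥0∞)
    (F : Measure ((X₁ × X₂) × Y₁) × Measure (X₂ × (Y₁ × Y₂))) : ℝ≥0∞ :=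
  ∫⁻ q, c₁ q.1.1 q.2 ∂F.1 + ∫⁻ q, c₂ q.1 q.2.2 ∂F.2

/-- `ζ` is a pivot measure between `μ` and `ν` for the separable cost `c₁ + c₂`:
some optimal cardinal flow glues on `ζ`. -/
def IsPivot (μ : Measure (X₁ × X₂)) (ν : Measure (Y₁ × Y₂))
    (c₁ : X₁ → Y₁ → ℝ≥0∞) (c₂ : X₂ → Y₂ → ℝ≥0∞) (ζ : Measure (Y₁ × X₂)) : Prop :=
  ∃ F ∈ Flows μ ν, F.1.map (fun p => (p.2, p.1.2)) = ζ ∧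
    CT c₁ c₂ F = ⨅ G ∈ Flows μ ν, CT c₁ c₂ G


lemma map_compProd_fst_aux {α β γ : Type*} [MeasurableSpace α] [MeasurableSpace β]
    [MeasurableSpace γ] (μ : Measure α) [SFinite μ] (κ : Kernel α (β × γ))
    [IsSFiniteKernel κ] :
    (μ ⊗ₘ κ).map (Prod.map id Prod.fst) = μ ⊗ₘ κ.fst := by
  ext s hs
  rw [Measure.map_apply (measurable_id.prodMap measurable_fst) hs,
    Measure.compProd_apply hs,
    Measure.compProd_apply (measurable_id.prodMap measurable_fst hs)]
  congr with a
  rw [Kernel.fst_apply' _ _ (measurable_prodMk_left hs)]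
  rfl

lemma map_compProd_snd_aux {α β γ : Type*} [MeasurableSpace α] [MeasurableSpace β]
    [MeasurableSpace γ] (μ : Measure α) [SFinite μ] (κ : Kernel α (β × γ))
    [IsSFiniteKernel κ] :
    (μ ⊗ₘ κ).map (Prod.map id Prod.snd) = μ ⊗ₘ κ.snd := by
  ext s hs
  rw [Measure.map_apply (measurable_id.prodMap measurable_snd) hs,
    Measure.compProd_apply hs,
    Measure.compProd_apply (measurable_id.prodMap measurable_snd hs)]
  congr with a
  rw [Kernel.snd_apply' _ _ (measurable_prodMk_left hs)]
  rfl

theorem stmt4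
    [TopologicalSpace X₁] [PolishSpace X₁] [BorelSpace X₁]
    [TopologicalSpace X₂] [PolishSpace X₂] [BorelSpace X₂]
    [TopologicalSpace Y₁] [PolishSpace Y₁] [BorelSpace Y₁]
    [TopologicalSpace Y₂] [PolishSpace Y₂] [BorelSpace Y₂]
    (μ : Measure (X₁ × X₂)) (ν : Measure (Y₁ × Y₂))
    [IsProbabilityMeasure μ] [IsProbabilityMeasure ν]
    (c₁ : X₁ → Y₁ → ℝ≥0∞) (c₂ : X₂ → Y₂ → ℝ≥0∞)
    (hc₁ : LowerSemicontinuous fun p : X₁ × Y₁ => c₁ p.1 p.2)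
    (hc₂ : LowerSemicontinuous fun p : X₂ × Y₂ => c₂ p.1 p.2) :
    Wc (fun x y => c₁ x.1 y.1 + c₂ x.2 y.2) μ ν = ⨅ F ∈ Flows μ ν, CT c₁ c₂ F := by
  have mc₁ : Measurable fun p : X₁ × Y₁ => c₁ p.1 p.2 := hc₁.measurable
  have mc₂ : Measurable fun p : X₂ × Y₂ => c₂ p.1 p.2 := hc₂.measurable
  apply le_antisymm
  · -- Wc ≤ inf over flows
    refine le_iInf₂ fun F hF => ?_
    obtain ⟨hP1, hP2, h1, h2, h3⟩ := hF
    set f1 := F.1 with hf1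
    set f2 := F.2 with hf2
    -- common marginal
    set ζ : Measure (Y₁ × X₂) := f1.map (fun p => (p.2, p.1.2)) with hζ
    have mζ1 : Measurable fun p : (X₁ × X₂) × Y₁ => (p.2, p.1.2) :=
      measurable_snd.prodMk (measurable_fst.snd)
    have mζ2 : Measurable fun p : X₂ × (Y₁ × Y₂) => (p.2.1, p.1) :=
      (measurable_snd.fst).prodMk measurable_fst
    haveI : IsProbabilityMeasure ζ := Measure.isProbabilityMeasure_map mζ1.aemeasurable
    set ρ₁ : Measure ((Y₁ × X₂) × X₁) := f1.map (fun p => ((p.2, p.1.2), p.1.1)) with hρ₁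
    set ρ₂ : Measure ((Y₁ × X₂) × Y₂) := f2.map (fun p => ((p.2.1, p.1), p.2.2)) with hρ₂
    have mρ₁ : Measurable fun p : (X₁ × X₂) × Y₁ => ((p.2, p.1.2), p.1.1) :=
      mζ1.prodMk measurable_fst.fst
    have mρ₂ : Measurable fun p : X₂ × (Y₁ × Y₂) => ((p.2.1, p.1), p.2.2) :=
      mζ2.prodMk measurable_snd.snd
    haveI : IsProbabilityMeasure ρ₁ := Measure.isProbabilityMeasure_map mρ₁.aemeasurable
    haveI : IsProbabilityMeasure ρ₂ := Measure.isProbabilityMeasure_map mρ₂.aemeasurable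
    have hρ₁fst : ρ₁.fst = ζ := by
      rw [Measure.fst, hρ₁, Measure.map_map measurable_fst mρ₁]; rfl
    have hρ₂fst : ρ₂.fst = ζ := by
      rw [Measure.fst, hρ₂, Measure.map_map measurable_fst mρ₂]
      exact h3.symm
    have hne : Nonempty ((X₁ × X₂) × Y₁) := by
      by_contra h
      rw [not_nonempty_iff] at h
      have h0 : f1 Set.univ = 1 := measure_univ
      rw [Set.univ_eq_empty_iff.mpr h, measure_empty] at h0
      exact zero_ne_one h0
    haveI : Nonempty X₁ := ⟨hne.some.1.1⟩
    haveI : Nonempty Y₂ := by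
      have hne2 : Nonempty (X₂ × (Y₁ × Y₂)) := by
        by_contra h
        rw [not_nonempty_iff] at h
        have h0 : f2 Set.univ = 1 := measure_univ
        rw [Set.univ_eq_empty_iff.mpr h, measure_empty] at h0
        exact zero_ne_one h0
      exact ⟨hne2.some.2.2⟩
    set κ₁ := ρ₁.condKernel with hκ₁
    set κ₂ := ρ₂.condKernel with hκ₂
    set lam : Measure ((Y₁ × X₂) × (X₁ × Y₂)) := ζ ⊗ₘ (κ₁ ×ₖ κ₂) with hlam
    have hA1 : lam.map (Prod.map id Prod.fst) = ρ₁ := by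
      rw [hlam, map_compProd_fst_aux, Kernel.fst_prod, ← hρ₁fst,
        Measure.disintegrate]
    have hA2 : lam.map (Prod.map id Prod.snd) = ρ₂ := by
      rw [hlam, map_compProd_snd_aux, Kernel.snd_prod, ← hρ₂fst,
        Measure.disintegrate]
    set g : ((Y₁ × X₂) × (X₁ × Y₂)) → (X₁ × X₂) × (Y₁ × Y₂) :=
      fun q => ((q.2.1, q.1.2), (q.1.1, q.2.2)) with hg
    have mg : Measurable g :=
      ((measurable_snd.fst).prodMk (measurable_fst.snd)).prodMk
        ((measurable_fst.fst).prodMk (measurable_snd.snd))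
    set π : Measure ((X₁ × X₂) × (Y₁ × Y₂)) := lam.map g with hπ
    have hcoup : IsCoupling π μ ν := by
      constructor
      · rw [hπ, Measure.map_map measurable_fst mg]
        have : (Prod.fst ∘ g) = (fun r : (Y₁ × X₂) × X₁ => (r.2, r.1.2)) ∘
            (Prod.map id Prod.fst) := rfl
        rw [this, ← Measure.map_map (measurable_snd.prodMk measurable_fst.snd)
          (measurable_id.prodMap measurable_fst), hA1, hρ₁,
          Measure.map_map (measurable_snd.prodMk measurable_fst.snd) mρ₁]
        exact h1
      · rw [hπ, Measure.map_map measurable_snd mg]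
        have : (Prod.snd ∘ g) = (fun r : (Y₁ × X₂) × Y₂ => (r.1.1, r.2)) ∘
            (Prod.map id Prod.snd) := rfl
        rw [this, ← Measure.map_map (measurable_fst.fst.prodMk measurable_snd)
          (measurable_id.prodMap measurable_snd), hA2, hρ₂,
          Measure.map_map (measurable_fst.fst.prodMk measurable_snd) mρ₂]
        exact h2
    have hle : Wc (fun x y => c₁ x.1 y.1 + c₂ x.2 y.2) μ ν ≤
        ∫⁻ p, c₁ p.1.1 p.2.1 + c₂ p.1.2 p.2.2 ∂π := iInf₂_le π hcoup
    refine hle.trans ?_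
    have mint1 : Measurable fun p : (X₁ × X₂) × (Y₁ × Y₂) => c₁ p.1.1 p.2.1 :=
      mc₁.comp (measurable_fst.fst.prodMk measurable_snd.fst)
    have mint2 : Measurable fun p : (X₁ × X₂) × (Y₁ × Y₂) => c₂ p.1.2 p.2.2 :=
      mc₂.comp (measurable_fst.snd.prodMk measurable_snd.snd)
    rw [hπ, lintegral_map (f := fun p : (X₁ × X₂) × (Y₁ × Y₂) => c₁ p.1.1 p.2.1 + c₂ p.1.2 p.2.2)
      (mint1.add mint2) mg]
    have hsplit : ∫⁻ q, c₁ (g q).1.1 (g q).2.1 + c₂ (g q).1.2 (g q).2.2 ∂lam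
        = (∫⁻ q, c₁ (g q).1.1 (g q).2.1 ∂lam) + ∫⁻ q, c₂ (g q).1.2 (g q).2.2 ∂lam :=
      lintegral_add_left (mint1.comp mg) _
    rw [hsplit]
    have mg1c : Measurable fun r : (Y₁ × X₂) × X₁ => c₁ r.2 r.1.1 :=
      mc₁.comp (measurable_snd.prodMk measurable_fst.fst)
    have mg2c : Measurable fun r : (Y₁ × X₂) × Y₂ => c₂ r.1.2 r.2 :=
      mc₂.comp (measurable_fst.snd.prodMk measurable_snd)
    have e1 : (∫⁻ q, c₁ (g q).1.1 (g q).2.1 ∂lam) = ∫⁻ q, c₁ q.1.1 q.2 ∂f1 := by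
      have h := lintegral_map mg1c (measurable_id.prodMap (measurable_fst (α := X₁) (β := Y₂)))
        (μ := lam)
      rw [hA1, hρ₁, lintegral_map mg1c mρ₁] at h
      exact h.symm
    have e2 : (∫⁻ q, c₂ (g q).1.2 (g q).2.2 ∂lam) = ∫⁻ q, c₂ q.1 q.2.2 ∂f2 := by
      have h := lintegral_map mg2c (measurable_id.prodMap (measurable_snd (α := X₁) (β := Y₂)))
        (μ := lam)
      rw [hA2, hρ₂, lintegral_map mg2c mρ₂] at h
      exact h.symm
    rw [e1, e2]; rfl
  · -- inf over flows ≤ Wc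
    refine le_iInf₂ fun π hπ => ?_
    obtain ⟨hfst, hsnd⟩ := hπ
    haveI : IsProbabilityMeasure π := by
      constructor
      have := congrArg (fun m : Measure (X₁ × X₂) => m Set.univ) hfst
      simpa [Measure.map_apply measurable_fst MeasurableSet.univ] using this
    set F : Measure ((X₁ × X₂) × Y₁) × Measure (X₂ × (Y₁ × Y₂)) :=
      (π.map (fun p => (p.1, p.2.1)), π.map (fun p => (p.1.2, p.2))) with hF
    have mg1 : Measurable fun p : (X₁ × X₂) × (Y₁ × Y₂) => (p.1, p.2.1) :=
      measurable_fst.prodMk measurable_snd.fst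
    have mg2 : Measurable fun p : (X₁ × X₂) × (Y₁ × Y₂) => (p.1.2, p.2) :=
      measurable_fst.snd.prodMk measurable_snd
    have hFmem : F ∈ Flows μ ν := by
      refine ⟨Measure.isProbabilityMeasure_map mg1.aemeasurable,
        Measure.isProbabilityMeasure_map mg2.aemeasurable, ?_, ?_, ?_⟩
      · rw [hF]; simp only
        rw [Measure.map_map measurable_fst mg1]; exact hfst
      · rw [hF]; simp only
        rw [Measure.map_map measurable_snd mg2]; exact hsnd
      · rw [hF]; simp only
        rw [Measure.map_map ((measurable_snd).prodMk measurable_fst.snd) mg1,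
          Measure.map_map ((measurable_snd.fst).prodMk measurable_fst) mg2]
        rfl
    refine le_trans (iInf₂_le F hFmem) ?_
    have mint1 : Measurable fun p : (X₁ × X₂) × (Y₁ × Y₂) => c₁ p.1.1 p.2.1 :=
      mc₁.comp (measurable_fst.fst.prodMk measurable_snd.fst)
    have mint2 : Measurable fun p : (X₁ × X₂) × (Y₁ × Y₂) => c₂ p.1.2 p.2.2 :=
      mc₂.comp (measurable_fst.snd.prodMk measurable_snd.snd)
    have mh1 : Measurable fun q : (X₁ × X₂) × Y₁ => c₁ q.1.1 q.2 :=
      mc₁.comp (measurable_fst.fst.prodMk measurable_snd)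
    have mh2 : Measurable fun q : X₂ × (Y₁ × Y₂) => c₂ q.1 q.2.2 :=
      mc₂.comp (measurable_fst.prodMk measurable_snd.snd)
    have : CT c₁ c₂ F = ∫⁻ p, c₁ p.1.1 p.2.1 + c₂ p.1.2 p.2.2 ∂π := by
      rw [CT, hF]; simp only
      rw [lintegral_map mh1 mg1, lintegral_map mh2 mg2, ← lintegral_add_left mint1]
    rw [this]
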